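/- In the CRDA justified-envy-freeness proof, Case 4 cannot occur: there is no blocking pair (c, h) with c a matched rotated child (c ∈ R_C^t) and h a home whose final match was set in the MATCHING phase (h ∉ R_H^t); i.e., U_c(h) > U_c(μ_t(c)) and V_h(c) > V_h(μ_t(h)) is impossible for such c, h. -/

import Mathlib

/-- A one-to-one (partial) matching between children and homes. -/
structure Matching (C H : Type) where
  toHome : C → Option H
  toChild : H → Option C
  consistent : ∀ c h, toHome c = some h ↔ toChild h = some c

/-- A dynamic matching market: cardinal utilities, arrival times, waiting costs. -/
structure Market (C H : Type) where
  U : C → H → ℝ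
  V : H → C → ℝ
  arrC : C → ℕ
  arrH : H → ℕ
  wC : ℝ
  wH : ℝ

/-- Accept/reject action profiles of homes over time. -/
abbrev Actions (H : Type) := H → ℕ → Bool

/-- A dynamic mechanism: given the homes' action profile, a matching in each period. -/
abbrev Mechanism (C H : Type) := Actions H → ℕ → Matching C H

open scoped Classical in
/-- The counterfactual profile in which home `h` rejects every placement before `t'`,
accepts at `t'`, and otherwise plays as in `a`; all other homes play as in `a`. -/
noncomputable def cfProfile {H : Type} (a : Actions H) (h : H) (t' : ℕ) : Actions H :=
  fun h' k =>
    if h' = h then (if k < t' then false else if k = t' then true else a h' k)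
    else a h' k

namespace Market

variable {C H : Type}

/-- Time-discounted utility of home `h` for child `c` at time `t`:
`V_h^t(c) = V_h(c) - (t - arrival(h)) * w_H`. -/
noncomputable def Vt (M : Market C H) (h : H) (c : C) (t : ℕ) : ℝ :=
  M.V h c - ((t : ℝ) - (M.arrH h : ℝ)) * M.wH

/-- Child `c` is active (present in the market) at time `t`:
she has arrived and no home has yet accepted a placement with her. -/
def activeC (M : Market C H) (Q : Mechanism C H) (a : Actions H) (c : C) (t : ℕ) : Prop :=
  M.arrC c ≤ t ∧ ¬ ∃ k < t, ∃ h, (Q a k).toHome c = some h ∧ a h k = true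

/-- Home `h` is active (present in the market) at time `t`:
it has arrived and has not yet accepted a placement. -/
def activeH (M : Market C H) (Q : Mechanism C H) (a : Actions H) (h : H) (t : ℕ) : Prop :=
  M.arrH h ≤ t ∧ ¬ ∃ k < t, (Q a k).toChild h ≠ none ∧ a h k = true

/-- Admissibility: the mechanism only matches agents active in the current market. -/
def feasible (M : Market C H) (Q : Mechanism C H) : Prop :=
  ∀ a t c h, (Q a t).toHome c = some h → M.activeC Q a c t ∧ M.activeH Q a h t

/-- Child `c` has been adopted (placement accepted) by time `t`. -/
def childAdopted (M : Market C H) (Q : Mechanism C H) (a : Actions H) (c : C) (t : ℕ) : Prop :=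
  ∃ k ≤ t, ∃ h, (Q a k).toHome c = some h ∧ a h k = true

/-- Home `h` has accepted a placement by time `t`. -/
def homeAccepted (M : Market C H) (Q : Mechanism C H) (a : Actions H) (h : H) (t : ℕ) : Prop :=
  ∃ k ≤ t, (Q a k).toChild h ≠ none ∧ a h k = true

/-- Justified envy-freeness at every period and action profile: no mutually matched
child and home both strictly prefer each other to their assigned partners. -/
def justifiedEnvyFree (M : Market C H) (Q : Mechanism C H) : Prop :=
  ∀ a t c h h' c', (Q a t).toHome c = some h' → (Q a t).toChild h = some c' →
    ¬ (M.U c h' < M.U c h ∧ M.V h c' < M.V h c)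

/-- Individual rationality at every period and action profile. -/
def individuallyRational (M : Market C H) (Q : Mechanism C H) : Prop :=
  ∀ a t c h, (Q a t).toHome c = some h → 0 ≤ M.U c h ∧ 0 ≤ M.V h c

/-- Patience-freeness: any placement offered at `t` is weakly better (time-discounted)
than the placement the home would receive at any later `t'` in the counterfactual in
which it rejects all placements before `t'` and accepts at `t'`. -/
noncomputable def patienceFree (M : Market C H) (Q : Mechanism C H) : Prop :=
  ∀ (a : Actions H) (t : ℕ) (h : H) (c : C), (Q a t).toChild h = some c →
    ∀ t' > t, ∀ c', (Q (cfProfile a h t') t').toChild h = some c' →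
      M.Vt h c' t' ≤ M.Vt h c t

/-- Dynamic envy-freeness: justified envy-free, patience-free, individually rational. -/
noncomputable def dynamicEnvyFree (M : Market C H) (Q : Mechanism C H) : Prop :=
  M.justifiedEnvyFree Q ∧ M.patienceFree Q ∧ M.individuallyRational Q

/-- Strict non-wastefulness: after every history and action profile there is never an
active unmatched child and an active unmatched home that find each other acceptable. -/
def strictlyNonWasteful (M : Market C H) (Q : Mechanism C H) : Prop :=
  ∀ a t, ¬ ∃ c h, M.activeC Q a c t ∧ M.activeH Q a h t ∧
    0 ≤ M.U c h ∧ 0 ≤ M.V h c ∧ (Q a t).toHome c = none ∧ (Q a t).toChild h = none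

/-- Weak non-wastefulness: when every home accepts every offered placement,
no mutually acceptable unmatched pair ever remains. -/
def weaklyNonWasteful (M : Market C H) (Q : Mechanism C H) : Prop :=
  ∀ t, ¬ ∃ c h, M.activeC Q (fun _ _ => true) c t ∧ M.activeH Q (fun _ _ => true) h t ∧
    0 ≤ M.U c h ∧ 0 ≤ M.V h c ∧
    (Q (fun _ _ => true) t).toHome c = none ∧ (Q (fun _ _ => true) t).toChild h = none

/-- The mechanism is a deterministic function of the history of markets (active sets)
and past matchings. -/
def historyDetermined (M : Market C H) (Q : Mechanism C H) : Prop :=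
  ∀ a a' t,
    (∀ k ≤ t, ∀ c, M.activeC Q a c k ↔ M.activeC Q a' c k) →
    (∀ k ≤ t, ∀ h, M.activeH Q a h k ↔ M.activeH Q a' h k) →
    (∀ k < t, Q a k = Q a' k) →
    Q a t = Q a' t

/-- `x` is the realized (true-utility, time-discounted) payoff of home `h`:
the time-discounted utility of an accepted placement, or `0` if `h` never accepts. -/
noncomputable def payoffIs (M : Market C H) (Q : Mechanism C H) (a : Actions H)
    (h : H) (x : ℝ) : Prop :=
  (∃ t c, (Q a t).toChild h = some c ∧ a h t = true ∧ x = M.Vt h c t) ∨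
  ((∀ t c, (Q a t).toChild h = some c → a h t = false) ∧ x = 0)

end Market

namespace Market

variable {C H : Type}

/-- Stability (feasibility, individual rationality and no blocking pair) of a matching
on given sets of active children and homes. -/
def IsStableOn (M : Market C H) (aC : Set C) (aH : Set H) (μ : Matching C H) : Prop :=
  (∀ c h, μ.toHome c = some h → c ∈ aC ∧ h ∈ aH ∧ 0 ≤ M.U c h ∧ 0 ≤ M.V h c) ∧
  (∀ c h, c ∈ aC → h ∈ aH → 0 ≤ M.U c h → 0 ≤ M.V h c →
    ¬ ((∀ h', μ.toHome c = some h' → M.U c h' < M.U c h) ∧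
       (∀ c', μ.toChild h = some c' → M.V h c' < M.V h c)))

end Market

namespace Market

variable {C H : Type}

/-- Characterization of the output of child-proposing Deferred Acceptance:
the child-optimal stable matching on the given sets. -/
def IsChildOptimalOn (M : Market C H) (aC : Set C) (aH : Set H) (μ : Matching C H) : Prop :=
  M.IsStableOn aC aH μ ∧
  ∀ μ', M.IsStableOn aC aH μ' → ∀ c h, μ'.toHome c = some h →
    ∃ h', μ.toHome c = some h' ∧ M.U c h ≤ M.U c h'

/-- CRDA's trigger: some home whose most recently rejected placement had
time-discounted value `prev h` gets a strictly better match in the MATCHING phase. -/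
noncomputable def crdaTrigger (M : Market C H) (prev : H → Option ℝ) (t : ℕ)
    (μM : Matching C H) : Prop :=
  ∃ h c b, μM.toChild h = some c ∧ prev h = some b ∧ b < M.Vt h c t

/-- A child is flagged for rotation: some acceptable active home is strictly preferred
to her MATCHING match, or her assigned home improves on its previously rejected placement. -/
noncomputable def crdaFlagged (M : Market C H) (aH : Set H) (prev : H → Option ℝ)
    (t : ℕ) (μM : Matching C H) (c : C) : Prop :=
  (∃ h ∈ aH, 0 ≤ M.V h c ∧ ∀ h', μM.toHome c = some h' → M.U c h' < M.U c h) ∨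
  (∃ h b, μM.toHome c = some h ∧ prev h = some b ∧ b < M.Vt h c t)

/-- The set `\hat R_C^t`: flagged or unmatched active children. -/
noncomputable def crdaHatRC (M : Market C H) (aC : Set C) (aH : Set H)
    (prev : H → Option ℝ) (t : ℕ) (μM : Matching C H) : Set C :=
  {c ∈ aC | M.crdaFlagged aH prev t μM c ∨ μM.toHome c = none}

/-- The set `R_H^t`: active homes matched to flagged children, or unmatched. -/
noncomputable def crdaRH (M : Market C H) (aC : Set C) (aH : Set H)
    (prev : H → Option ℝ) (t : ℕ) (μM : Matching C H) : Set H :=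
  {h ∈ aH | (∃ c ∈ M.crdaHatRC aC aH prev t μM, μM.toChild h = some c) ∨
    μM.toChild h = none}

/-- The set `R_C^t`: children of `\hat R_C^t` weakly below every relevant home's
previously rejected placement value. -/
noncomputable def crdaRC (M : Market C H) (aC : Set C) (aH : Set H)
    (prev : H → Option ℝ) (t : ℕ) (μM : Matching C H) : Set C :=
  {c ∈ M.crdaHatRC aC aH prev t μM |
    ∀ h ∈ M.crdaRH aC aH prev t μM, 0 ≤ M.U c h →
      ∀ b, prev h = some b → M.Vt h c t ≤ b}

/-- One period of Child Rotating Deferred Acceptance on the market given by active sets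
`aC`, `aH`, where `prev h` records the time-discounted value of home `h`'s most recently
rejected placement (if any): first child-proposing DA (`μM`); if triggered, ROTATION
re-runs child-proposing DA (`μR`) on the rotation sets, children excluded from the
rotation set become unmatched, and all other agents keep their MATCHING placements. -/
structure CRDAStep (M : Market C H) (aC : Set C) (aH : Set H)
    (prev : H → Option ℝ) (t : ℕ) where
  μM : Matching C H
  μR : Matching C H
  μ : Matching C H
  matching_opt : M.IsChildOptimalOn aC aH μM
  no_trigger : ¬ M.crdaTrigger prev t μM → μ = μM
  rot_opt : M.crdaTrigger prev t μM →
    M.IsChildOptimalOn (M.crdaRC aC aH prev t μM) (M.crdaRH aC aH prev t μM) μR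
  final_rotC : M.crdaTrigger prev t μM →
    ∀ c ∈ M.crdaRC aC aH prev t μM, μ.toHome c = μR.toHome c
  final_rotH : M.crdaTrigger prev t μM →
    ∀ h ∈ M.crdaRH aC aH prev t μM, μ.toChild h = μR.toChild h
  final_dropC : M.crdaTrigger prev t μM →
    ∀ c ∈ M.crdaHatRC aC aH prev t μM, c ∉ M.crdaRC aC aH prev t μM → μ.toHome c = none
  final_keepC : M.crdaTrigger prev t μM →
    ∀ c ∈ aC, c ∉ M.crdaHatRC aC aH prev t μM → μ.toHome c = μM.toHome c
  final_keepH : M.crdaTrigger prev t μM →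
    ∀ h ∈ aH, h ∉ M.crdaRH aC aH prev t μM → μ.toChild h = μM.toChild h

end Market


open scoped Classical in
/-- Swap matching: children in `L` get their `μM` match, others their `μR` match. -/
noncomputable def nuMatch {C H : Type} (μM μR : Matching C H) (L : Set C)
    (hK : ∀ h d, d ∈ L → μM.toHome d = some h → ∀ e, μR.toChild h = some e → e ∈ L) :
    Matching C H where
  toHome d := if d ∈ L then μM.toHome d else μR.toHome d
  toChild h := if ∃ d ∈ L, μM.toHome d = some h then μM.toChild h
    else (μR.toChild h).bind (fun d => if d ∈ L then none else some d)
  consistent := by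
    intro c h
    constructor
    · intro hc
      by_cases hcL : c ∈ L
      · rw [if_pos hcL] at hc
        rw [if_pos ⟨c, hcL, hc⟩]
        exact (μM.consistent c h).1 hc
      · rw [if_neg hcL] at hc
        have hcond : ¬ ∃ d ∈ L, μM.toHome d = some h := by
          rintro ⟨d, hdL, hdh⟩
          exact hcL (hK h d hdL hdh c ((μR.consistent c h).1 hc))
        rw [if_neg hcond, (μR.consistent c h).1 hc]
        simp [hcL]
    · intro hc
      by_cases hcond : ∃ d ∈ L, μM.toHome d = some h
      · rw [if_pos hcond] at hc
        obtain ⟨d, hdL, hdh⟩ := hcond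
        have hd : μM.toChild h = some d := (μM.consistent d h).1 hdh
        rw [hd, Option.some_inj] at hc
        subst hc
        rw [if_pos hdL]
        exact hdh
      · rw [if_neg hcond] at hc
        cases hR : μR.toChild h with
        | none => rw [hR] at hc; simp at hc
        | some d =>
          rw [hR] at hc
          by_cases hdL : d ∈ L
          · simp [hdL] at hc
          · simp [hdL] at hc
            subst hc
            rw [if_neg hdL]
            exact (μR.consistent d h).2 hR

/-- Case 4 of the CRDA justified-envy-freeness proof is impossible: in a triggered
period there is no blocking pair consisting of a matched rotated child `c ∈ R_C^t`
and a home `h ∉ R_H^t` whose final match was set in the MATCHING phase. -/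
theorem crda_case4_impossible {C H : Type} [Finite C] [Finite H] (M : Market C H)
    (aC : Set C) (aH : Set H) (prev : H → Option ℝ) (t : ℕ)
    (S : Market.CRDAStep M aC aH prev t)
    (strictU : ∀ c h h', h ≠ h' → M.U c h ≠ M.U c h')
    (strictV : ∀ h c c', c ≠ c' → M.V h c ≠ M.V h c')
    (htrig : M.crdaTrigger prev t S.μM)
    (c : C) (hc : c ∈ M.crdaRC aC aH prev t S.μM)
    (h : H) (hh : h ∈ aH) (hnot : h ∉ M.crdaRH aC aH prev t S.μM)
    (h' : H) (c' : C) (hmc : S.μ.toHome c = some h') (hmh : S.μ.toChild h = some c') :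
    ¬ (M.U c h' < M.U c h ∧ M.V h c' < M.V h c) := by
  rintro ⟨hU, hV⟩
  obtain ⟨SM, -⟩ := S.matching_opt
  obtain ⟨SR, optR⟩ := S.rot_opt htrig
  set μM := S.μM with hμMdef
  set μR := S.μR with hμRdef
  set RC := M.crdaRC aC aH prev t μM with hRCdef
  set RH := M.crdaRH aC aH prev t μM with hRHdef
  set hatRC := M.crdaHatRC aC aH prev t μM with hhatdef
  have RCsub : ∀ {d : C}, d ∈ RC → d ∈ aC := fun hd => hd.1.1
  have RChat : ∀ {d : C}, d ∈ RC → d ∈ hatRC := fun hd => hd.1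
  have RHsub : ∀ {g : H}, g ∈ RH → g ∈ aH := fun hg => hg.1
  have memRH : ∀ d g, d ∈ hatRC → μM.toHome d = some g → g ∈ RH := by
    intro d g hdhat hdg
    exact ⟨(SM.1 d g hdg).2.1, Or.inl ⟨d, hdhat, (μM.consistent d g).1 hdg⟩⟩
  -- final matches
  have hμRc : μR.toHome c = some h' := by
    have := hmc; rwa [S.final_rotC htrig c hc] at this
  have hμMh : μM.toChild h = some c' := by
    have := hmh; rwa [S.final_keepH htrig h hh hnot] at this
  have hμMc' : μM.toHome c' = some h := (μM.consistent c' h).2 hμMh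
  -- basic nonnegativity
  have hU0' : 0 ≤ M.U c h' := (SR.1 c h' hμRc).2.2.1
  have hVh'c : 0 ≤ M.V h' c := (SR.1 c h' hμRc).2.2.2
  have hVc'0 : 0 ≤ M.V h c' := (SM.1 c' h hμMc').2.2.2
  have hUch : 0 ≤ M.U c h := le_of_lt (lt_of_le_of_lt hU0' hU)
  have hVhc : 0 ≤ M.V h c := le_of_lt (lt_of_le_of_lt hVc'0 hV)
  -- c is matched in μM to some h₀ with U c h ≤ U c h₀
  have hclause2 : ∀ c'', μM.toChild h = some c'' → M.V h c'' < M.V h c := by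
    intro c'' hc''; rw [hμMh, Option.some_inj] at hc''; subst hc''; exact hV
  have hnb := SM.2 c h (RCsub hc) hh hUch hVhc
  have hA : ¬ ∀ h'', μM.toHome c = some h'' → M.U c h'' < M.U c h :=
    fun a => hnb ⟨a, hclause2⟩
  push_neg at hA
  obtain ⟨h₀, hμMc, hUh₀⟩ := hA
  -- the set of strict losers
  set L : Set C := {d | d ∈ RC ∧ ∃ g₁ g₂, μM.toHome d = some g₁ ∧
    μR.toHome d = some g₂ ∧ M.U d g₂ < M.U d g₁} with hLdef
  have hcL : c ∈ L := ⟨hc, h₀, h', hμMc, hμRc, lt_of_lt_of_le hU hUh₀⟩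
  -- closure lemma: the μR partner of a loser's μM home is a loser
  have KC : ∀ d g₁, d ∈ L → μM.toHome d = some g₁ →
      ∃ d', μR.toChild g₁ = some d' ∧ d' ∈ L ∧ M.V g₁ d < M.V g₁ d' := by
    intro d g₁ hdL hdg₁
    obtain ⟨hdRC, g₁', g₂, hM, hRd, hUlt⟩ := hdL
    rw [hdg₁, Option.some_inj] at hM
    subst hM
    have hU0 : 0 ≤ M.U d g₁ := (SM.1 d g₁ hdg₁).2.2.1
    have hV0 : 0 ≤ M.V g₁ d := (SM.1 d g₁ hdg₁).2.2.2
    have hg₁RH : g₁ ∈ RH := memRH d g₁ (RChat hdRC) hdg₁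
    have hA1 : ∀ g, μR.toHome d = some g → M.U d g < M.U d g₁ := by
      intro g hg; rw [hRd, Option.some_inj] at hg; subst hg; exact hUlt
    have hnb1 := SR.2 d g₁ hdRC hg₁RH hU0 hV0
    have hA2 : ¬ ∀ e, μR.toChild g₁ = some e → M.V g₁ e < M.V g₁ d :=
      fun a => hnb1 ⟨hA1, a⟩
    push_neg at hA2
    obtain ⟨d', hRd', hVle⟩ := hA2
    have hRd'home : μR.toHome d' = some g₁ := (μR.consistent d' g₁).2 hRd'
    have hdne : d' ≠ d := by
      rintro rfl
      rw [hRd, Option.some_inj] at hRd'home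
      subst hRd'home
      exact absurd hUlt (lt_irrefl _)
    have hVlt : M.V g₁ d < M.V g₁ d' :=
      lt_of_le_of_ne hVle (strictV g₁ d d' (fun he => hdne he.symm))
    have hd'RC : d' ∈ RC := (SR.1 d' g₁ hRd'home).1
    have hU0' : 0 ≤ M.U d' g₁ := (SR.1 d' g₁ hRd'home).2.2.1
    have hV0' : 0 ≤ M.V g₁ d' := (SR.1 d' g₁ hRd'home).2.2.2
    have hI2 : ∀ e, μM.toChild g₁ = some e → M.V g₁ e < M.V g₁ d' := by
      intro e he
      rw [(μM.consistent d g₁).1 hdg₁, Option.some_inj] at he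
      subst he; exact hVlt
    have hnb2 := SM.2 d' g₁ (RCsub hd'RC) (RHsub hg₁RH) hU0' hV0'
    have hI1 : ¬ ∀ g, μM.toHome d' = some g → M.U d' g < M.U d' g₁ :=
      fun a => hnb2 ⟨a, hI2⟩
    push_neg at hI1
    obtain ⟨gg, hMd', hUle⟩ := hI1
    have hgne : gg ≠ g₁ := by
      rintro rfl
      exact hdne (Option.some_inj.mp
        (((μM.consistent d' gg).1 hMd').symm.trans ((μM.consistent d gg).1 hdg₁)))
    have hUlt' : M.U d' g₁ < M.U d' gg :=
      lt_of_le_of_ne hUle (strictU d' g₁ gg (fun he => hgne he.symm))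
    exact ⟨d', hRd', ⟨hd'RC, gg, g₁, hMd', hRd'home, hUlt'⟩, hVlt⟩
  -- the chain map on losers
  set f : C → C := fun d => ((μM.toHome d).bind μR.toChild).getD d with hfdef
  have hfval : ∀ d g₁ d', μM.toHome d = some g₁ → μR.toChild g₁ = some d' → f d = d' := by
    intro d g₁ d' h1 h2; simp [hfdef, h1, h2]
  have hmaps : Set.MapsTo f L L := by
    intro d hdL
    obtain ⟨-, g₁, g₂, hM, -, -⟩ := id hdL
    obtain ⟨d', hRd', hd'L, -⟩ := KC d g₁ hdL hM
    rw [hfval d g₁ d' hM hRd']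
    exact hd'L
  have hRhomef : ∀ d, d ∈ L → μR.toHome (f d) = μM.toHome d := by
    intro d hdL
    obtain ⟨-, g₁, g₂, hM, -, -⟩ := id hdL
    obtain ⟨d', hRd', -, -⟩ := KC d g₁ hdL hM
    rw [hfval d g₁ d' hM hRd', hM]
    exact (μR.consistent d' g₁).2 hRd'
  have hinj : Set.InjOn f L := by
    intro d hdL e heL hfe
    have h1 : μM.toHome d = μM.toHome e := by
      rw [← hRhomef d hdL, ← hRhomef e heL, hfe]
    obtain ⟨-, g₁, g₂, hM, -, -⟩ := id hdL
    rw [hM] at h1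
    have := ((μM.consistent d g₁).1 hM).symm.trans ((μM.consistent e g₁).1 h1.symm)
    exact Option.some_inj.mp this
  have hbij : Set.BijOn f L L :=
    ((Set.toFinite L).injOn_iff_bijOn_of_mapsTo hmaps).mp hinj
  -- surjectivity lemma
  have SL : ∀ d' g₂, d' ∈ L → μR.toHome d' = some g₂ →
      ∃ d, d ∈ L ∧ μM.toHome d = some g₂ := by
    intro d' g₂ hd'L hRd'
    obtain ⟨d, hdL, hfd⟩ := hbij.2.2 hd'L
    refine ⟨d, hdL, ?_⟩
    have := hRhomef d hdL
    rw [hfd, hRd'] at this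
    exact this.symm
  -- closure hypothesis for the swap matching
  have hK : ∀ g d, d ∈ L → μM.toHome d = some g → ∀ e, μR.toChild g = some e → e ∈ L := by
    intro g d hdL hdg e he
    obtain ⟨d', hRd', hd'L, -⟩ := KC d g hdL hdg
    rw [hRd', Option.some_inj] at he
    subst he; exact hd'L
  set ν : Matching C H := nuMatch μM μR L hK with hνdef
  have hνHome₁ : ∀ d, d ∈ L → ν.toHome d = μM.toHome d := by
    intro d hd; rw [hνdef]; simp only [nuMatch]; rw [if_pos hd]
  have hνHome₂ : ∀ d, d ∉ L → ν.toHome d = μR.toHome d := by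
    intro d hd; rw [hνdef]; simp only [nuMatch]; rw [if_neg hd]
  have hνChild₁ : ∀ g, (∃ d ∈ L, μM.toHome d = some g) → ν.toChild g = μM.toChild g := by
    intro g hg; rw [hνdef]; simp only [nuMatch]; rw [if_pos hg]
  have hνChild₂ : ∀ g e, (¬ ∃ d ∈ L, μM.toHome d = some g) → μR.toChild g = some e →
      e ∉ L → ν.toChild g = some e := by
    intro g e hg he heL; rw [hνdef]; simp only [nuMatch]; rw [if_neg hg, he]
    simp [heL]
  -- ν is stable on (RC, RH)
  have Stab : M.IsStableOn RC RH ν := by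
    constructor
    · intro d g hdg
      by_cases hdL : d ∈ L
      · rw [hνHome₁ d hdL] at hdg
        exact ⟨hdL.1, memRH d g (RChat hdL.1) hdg, (SM.1 d g hdg).2.2⟩
      · rw [hνHome₂ d hdL] at hdg
        exact SR.1 d g hdg
    · intro ct ht hct hht hU0 hV0
      rintro ⟨B1, B2⟩
      have SRnb := SR.2 ct ht hct hht hU0 hV0
      have SMnb := SM.2 ct ht (RCsub hct) (RHsub hht) hU0 hV0
      -- helper: if the μR partner of ht is not a loser and no loser's μM home is ht,
      -- the toChild of ν at ht equals μR's
      by_cases hctL : ct ∈ L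
      · -- ct is a loser
        obtain ⟨hctRC, g₁, g₂, hM₁, hR₂, hUlt⟩ := id hctL
        have hB1g₁ : M.U ct g₁ < M.U ct ht := by
          apply B1; rw [hνHome₁ ct hctL]; exact hM₁
        have hA1 : ∀ g, μR.toHome ct = some g → M.U ct g < M.U ct ht := by
          intro g hg; rw [hR₂, Option.some_inj] at hg; subst hg
          exact lt_trans hUlt hB1g₁
        have hA2 : ¬ ∀ e, μR.toChild ht = some e → M.V ht e < M.V ht ct :=
          fun a => SRnb ⟨hA1, a⟩
        push_neg at hA2
        obtain ⟨cc, hRcc, hVge⟩ := hA2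
        by_cases hccL : cc ∈ L
        · obtain ⟨d, hdL, hdht⟩ := SL cc ht hccL ((μR.consistent cc ht).2 hRcc)
          have hνht : ν.toChild ht = some d := by
            rw [hνChild₁ ht ⟨d, hdL, hdht⟩]
            exact (μM.consistent d ht).1 hdht
          have hB2d : M.V ht d < M.V ht ct := B2 d hνht
          have hI1 : ∀ g, μM.toHome ct = some g → M.U ct g < M.U ct ht := by
            intro g hg; rw [hM₁, Option.some_inj] at hg; subst hg; exact hB1g₁
          have hI2 : ¬ ∀ e, μM.toChild ht = some e → M.V ht e < M.V ht ct :=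
            fun a => SMnb ⟨hI1, a⟩
          push_neg at hI2
          obtain ⟨c₂, hc₂, hVge₂⟩ := hI2
          rw [(μM.consistent d ht).1 hdht, Option.some_inj] at hc₂
          subst hc₂
          exact absurd hB2d (not_lt.mpr hVge₂)
        · have hcond : ¬ ∃ d ∈ L, μM.toHome d = some ht := by
            rintro ⟨d, hdL, hdht⟩
            obtain ⟨d', hRd', hd'L, -⟩ := KC d ht hdL hdht
            rw [hRcc, Option.some_inj] at hRd'
            exact hccL (hRd' ▸ hd'L)
          have hνht : ν.toChild ht = some cc :=
            hνChild₂ ht cc hcond hRcc hccL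
          exact absurd (B2 cc hνht) (not_lt.mpr hVge)
      · -- ct is not a loser
        have hA1 : ∀ g, μR.toHome ct = some g → M.U ct g < M.U ct ht := by
          intro g hg; apply B1; rw [hνHome₂ ct hctL]; exact hg
        have hA2 : ¬ ∀ e, μR.toChild ht = some e → M.V ht e < M.V ht ct :=
          fun a => SRnb ⟨hA1, a⟩
        push_neg at hA2
        obtain ⟨cc, hRcc, hVge⟩ := hA2
        by_cases hccL : cc ∈ L
        · obtain ⟨d, hdL, hdht⟩ := SL cc ht hccL ((μR.consistent cc ht).2 hRcc)
          have hνht : ν.toChild ht = some d := by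
            rw [hνChild₁ ht ⟨d, hdL, hdht⟩]
            exact (μM.consistent d ht).1 hdht
          have hB2d : M.V ht d < M.V ht ct := B2 d hνht
          have hI2 : ∀ e, μM.toChild ht = some e → M.V ht e < M.V ht ct := by
            intro e he
            rw [(μM.consistent d ht).1 hdht, Option.some_inj] at he
            subst he; exact hB2d
          have hI1 : ¬ ∀ g, μM.toHome ct = some g → M.U ct g < M.U ct ht :=
            fun a => SMnb ⟨a, hI2⟩
          push_neg at hI1
          obtain ⟨gg, hMgg, hUgle⟩ := hI1
          cases hRct : μR.toHome ct with
          | some g₂ =>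
            have : M.U ct g₂ < M.U ct ht := hA1 g₂ hRct
            exact hctL ⟨hct, gg, g₂, hMgg, hRct, lt_of_lt_of_le this hUgle⟩
          | none =>
            -- ct is μM-matched to gg but μR-unmatched
            have hggRH : gg ∈ RH := memRH ct gg (RChat hct) hMgg
            have hU0g : 0 ≤ M.U ct gg := (SM.1 ct gg hMgg).2.2.1
            have hV0g : 0 ≤ M.V gg ct := (SM.1 ct gg hMgg).2.2.2
            have hnb' := SR.2 ct gg hct hggRH hU0g hV0g
            have hA1' : ∀ g, μR.toHome ct = some g → M.U ct g < M.U ct gg := by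
              intro g hg; rw [hRct] at hg; cases hg
            have hA2' : ¬ ∀ e, μR.toChild gg = some e → M.V gg e < M.V gg ct :=
              fun a => hnb' ⟨hA1', a⟩
            push_neg at hA2'
            obtain ⟨c₃, hRc₃, hVge₃⟩ := hA2'
            have hRc₃home : μR.toHome c₃ = some gg := (μR.consistent c₃ gg).2 hRc₃
            have hc₃ne : c₃ ≠ ct := by
              rintro rfl; rw [hRct] at hRc₃home; cases hRc₃home
            have hVlt₃ : M.V gg ct < M.V gg c₃ :=
              lt_of_le_of_ne hVge₃ (strictV gg ct c₃ (fun he => hc₃ne he.symm))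
            have hc₃RC : c₃ ∈ RC := (SR.1 c₃ gg hRc₃home).1
            have hU0₃ : 0 ≤ M.U c₃ gg := (SR.1 c₃ gg hRc₃home).2.2.1
            have hV0₃ : 0 ≤ M.V gg c₃ := (SR.1 c₃ gg hRc₃home).2.2.2
            have hI2₃ : ∀ e, μM.toChild gg = some e → M.V gg e < M.V gg c₃ := by
              intro e he
              rw [(μM.consistent ct gg).1 hMgg, Option.some_inj] at he
              subst he; exact hVlt₃
            have hnb₃ := SM.2 c₃ gg (RCsub hc₃RC) (RHsub hggRH) hU0₃ hV0₃
            have hI1₃ : ¬ ∀ g, μM.toHome c₃ = some g → M.U c₃ g < M.U c₃ gg :=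
              fun a => hnb₃ ⟨a, hI2₃⟩
            push_neg at hI1₃
            obtain ⟨gg3, hMc₃, hUle₃⟩ := hI1₃
            have hgne₃ : gg3 ≠ gg := by
              rintro rfl
              exact hc₃ne (Option.some_inj.mp
                (((μM.consistent c₃ gg3).1 hMc₃).symm.trans ((μM.consistent ct gg3).1 hMgg)))
            have hUlt₃ : M.U c₃ gg < M.U c₃ gg3 :=
              lt_of_le_of_ne hUle₃ (strictU c₃ gg gg3 (fun he => hgne₃ he.symm))
            have hc₃L : c₃ ∈ L := ⟨hc₃RC, gg3, gg, hMc₃, hRc₃home, hUlt₃⟩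
            obtain ⟨d₃, hd₃L, hd₃gg⟩ := SL c₃ gg hc₃L hRc₃home
            have : d₃ = ct := Option.some_inj.mp
              (((μM.consistent d₃ gg).1 hd₃gg).symm.trans ((μM.consistent ct gg).1 hMgg))
            exact hctL (this ▸ hd₃L)
        · have hcond : ¬ ∃ d ∈ L, μM.toHome d = some ht := by
            rintro ⟨d, hdL, hdht⟩
            obtain ⟨d', hRd', hd'L, -⟩ := KC d ht hdL hdht
            rw [hRcc, Option.some_inj] at hRd'
            exact hccL (hRd' ▸ hd'L)
          have hνht : ν.toChild ht = some cc :=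
            hνChild₂ ht cc hcond hRcc hccL
          exact absurd (B2 cc hνht) (not_lt.mpr hVge)
  -- contradict child-optimality of μR
  have hνc : ν.toHome c = some h₀ := by
    rw [hνHome₁ c hcL]; exact hμMc
  obtain ⟨h'', hμRh'', hle⟩ := optR ν Stab c h₀ hνc
  rw [hμRc, Option.some_inj] at hμRh''
  subst hμRh''
  have : M.U c h₀ < M.U c h₀ :=
    lt_of_le_of_lt hle (lt_of_lt_of_le hU hUh₀)
  exact absurd this (lt_irrefl _)
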